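/- Gaussian integral identity (Owen 10,010.1): for real constants a and b, \int_{-\infty}^{Y} \Phi(a + b x) \phi(x) dx equals the standard bivariate normal c.d.f. evaluated at (a/\sqrt{1+b^2}, Y) with correlation \rho = -b/\sqrt{1+b^2}, where \phi and \Phi are the standard normal p.d.f. and c.d.f. -/

import Mathlib

open MeasureTheory

/-- Standard normal p.d.f. -/
noncomputable def stdPdf (x : ℝ) : ℝ :=
  (Real.sqrt (2 * Real.pi))⁻¹ * Real.exp (-x ^ 2 / 2)

/-- Standard normal c.d.f. -/
noncomputable def stdCdf (x : ℝ) : ℝ := ∫ t in Set.Iic x, stdPdf t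

/-- Standard bivariate normal c.d.f. with correlation ρ. -/
noncomputable def bvnCdf (h k ρ : ℝ) : ℝ :=
  ∫ x in Set.Iic h, ∫ y in Set.Iic k,
    (2 * Real.pi * Real.sqrt (1 - ρ ^ 2))⁻¹ *
      Real.exp (-(x ^ 2 - 2 * ρ * x * y + y ^ 2) / (2 * (1 - ρ ^ 2)))

lemma stdPdf_nonneg (x : ℝ) : 0 ≤ stdPdf x := by
  unfold stdPdf; positivity

lemma stdPdf_continuous : Continuous stdPdf := by
  unfold stdPdf
  continuity

lemma stdPdf_le (x : ℝ) : stdPdf x ≤ (Real.sqrt (2 * Real.pi))⁻¹ := by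
  unfold stdPdf
  have h1 : Real.exp (-x ^ 2 / 2) ≤ 1 := by
    rw [Real.exp_le_one_iff]; nlinarith [sq_nonneg x]
  have h2 : (0:ℝ) ≤ (Real.sqrt (2 * Real.pi))⁻¹ := by positivity
  nlinarith

lemma integrable_stdPdf : Integrable stdPdf := by
  have : stdPdf = fun x => (Real.sqrt (2 * Real.pi))⁻¹ * Real.exp (-(1/2 : ℝ) * x ^ 2) := by
    funext x; unfold stdPdf; ring_nf
  rw [this]
  exact (integrable_exp_neg_mul_sq (by norm_num)).const_mul _

lemma integral_stdPdf : ∫ x, stdPdf x = 1 := by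
  have : ∀ x : ℝ, stdPdf x = (Real.sqrt (2 * Real.pi))⁻¹ * Real.exp (-(1/2 : ℝ) * x ^ 2) := by
    intro x; unfold stdPdf; ring_nf
  simp_rw [this]
  rw [integral_const_mul, integral_gaussian]
  have h2 : Real.pi / (1/2 : ℝ) = 2 * Real.pi := by ring
  rw [h2, inv_mul_cancel₀ (by positivity)]

lemma comp_affine {c : ℝ} (hc : 0 < c) (d : ℝ) (F : ℝ → ℝ) :
    ∫ x : ℝ, F (c * x + d) = c⁻¹ * ∫ u, F u := by
  have h2 := Measure.integral_comp_mul_left (fun y => F (y + d)) c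
  rw [h2, integral_add_right_eq_self F d, abs_of_pos (inv_pos.mpr hc), smul_eq_mul]

lemma sub_total {c : ℝ} (hc : 0 < c) (d : ℝ) : ∫ x : ℝ, c * stdPdf (c * x + d) = 1 := by
  rw [integral_const_mul, comp_affine hc d stdPdf, integral_stdPdf]
  field_simp

lemma sub_Iic {c : ℝ} (hc : 0 < c) (d h : ℝ) :
    ∫ x in Set.Iic h, c * stdPdf (c * x + d) = stdCdf (c * h + d) := by
  have hind : ∀ x : ℝ, (Set.Iic h).indicator (fun x => c * stdPdf (c * x + d)) x
      = ((Set.Iic (c * h + d)).indicator (fun u => c * stdPdf u)) (c * x + d) := by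
    intro x
    by_cases hx : x ≤ h
    · rw [Set.indicator_of_mem (Set.mem_Iic.mpr hx),
        Set.indicator_of_mem (Set.mem_Iic.mpr (by nlinarith))]
    · rw [Set.indicator_of_notMem (by simpa using hx),
        Set.indicator_of_notMem (by simp; nlinarith [lt_of_not_ge hx])]
  rw [← integral_indicator measurableSet_Iic]
  simp_rw [hind]
  rw [comp_affine hc d, integral_indicator measurableSet_Iic]
  rw [integral_const_mul]
  unfold stdCdf
  field_simp

lemma alg {b c : ℝ} (hc : 0 < c) (hc2 : c ^ 2 = 1 + b ^ 2) (x y : ℝ) :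
    (2 * Real.pi * Real.sqrt (1 - (-(b / c)) ^ 2))⁻¹ *
      Real.exp (-(x ^ 2 - 2 * (-(b / c)) * x * y + y ^ 2) / (2 * (1 - (-(b / c)) ^ 2))) =
    stdPdf y * (c * stdPdf (c * x + b * y)) := by
  have hcne : c ≠ 0 := hc.ne'
  have h1 : 1 - (-(b / c)) ^ 2 = (c ^ 2)⁻¹ := by
    rw [neg_pow, div_pow]
    field_simp
    linarith [hc2]
  have hsq : Real.sqrt (1 - (-(b / c)) ^ 2) = c⁻¹ := by
    rw [h1, ← inv_pow, Real.sqrt_sq (by positivity)]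
  have hexp : -(x ^ 2 - 2 * (-(b / c)) * x * y + y ^ 2) / (2 * (1 - (-(b / c)) ^ 2))
      = -y ^ 2 / 2 + -(c * x + b * y) ^ 2 / 2 := by
    rw [h1]
    field_simp
    linear_combination (-y^2) * hc2
  rw [hsq, hexp, Real.exp_add]
  unfold stdPdf
  have h2π : Real.sqrt (2 * Real.pi) * Real.sqrt (2 * Real.pi) = 2 * Real.pi :=
    Real.mul_self_sqrt (by positivity)
  have hπ : (0:ℝ) < Real.sqrt (2 * Real.pi) := Real.sqrt_pos.mpr (by positivity)
  have hS : Real.sqrt 2 * Real.sqrt Real.pi * (Real.sqrt 2 * Real.sqrt Real.pi) = 2 * Real.pi := by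
    have h2 : Real.sqrt 2 * Real.sqrt 2 = 2 := Real.mul_self_sqrt (by norm_num)
    have hp : Real.sqrt Real.pi * Real.sqrt Real.pi = Real.pi := Real.mul_self_sqrt Real.pi_pos.le
    linear_combination (Real.sqrt Real.pi * Real.sqrt Real.pi) * h2 + 2 * hp
  field_simp
  linear_combination h2π

lemma sym {b c : ℝ} (hc2 : c ^ 2 = 1 + b ^ 2) (x y : ℝ) :
    stdPdf y * (c * stdPdf (c * x + b * y)) = stdPdf x * (c * stdPdf (c * y + b * x)) := by
  unfold stdPdf
  have h : -(y:ℝ) ^ 2 / 2 + -(c * x + b * y) ^ 2 / 2 = -x ^ 2 / 2 + -(c * y + b * x) ^ 2 / 2 := by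
    nlinarith [hc2]
  calc (Real.sqrt (2 * Real.pi))⁻¹ * Real.exp (-y ^ 2 / 2) *
        (c * ((Real.sqrt (2 * Real.pi))⁻¹ * Real.exp (-(c * x + b * y) ^ 2 / 2)))
      = c * (Real.sqrt (2 * Real.pi))⁻¹ * (Real.sqrt (2 * Real.pi))⁻¹ *
          Real.exp (-y ^ 2 / 2 + -(c * x + b * y) ^ 2 / 2) := by rw [Real.exp_add]; ring
    _ = c * (Real.sqrt (2 * Real.pi))⁻¹ * (Real.sqrt (2 * Real.pi))⁻¹ *
          Real.exp (-x ^ 2 / 2 + -(c * y + b * x) ^ 2 / 2) := by rw [h]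
    _ = _ := by rw [Real.exp_add]; ring

lemma integrable_f {b c : ℝ} (hc : 0 < c) (hc2 : c ^ 2 = 1 + b ^ 2) :
    Integrable (Function.uncurry fun x y => stdPdf y * (c * stdPdf (c * x + b * y)))
      ((volume : Measure ℝ).prod (volume : Measure ℝ)) := by
  have hcont : Continuous (Function.uncurry fun x y : ℝ => stdPdf y * (c * stdPdf (c * x + b * y))) := by
    apply Continuous.mul
    · exact stdPdf_continuous.comp continuous_snd
    · exact continuous_const.mul (stdPdf_continuous.comp (by continuity))
  rw [integrable_prod_iff hcont.aestronglyMeasurable]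
  simp only [Function.uncurry_apply_pair]
  constructor
  · refine Filter.Eventually.of_forall fun x => ?_
    apply Integrable.mono (integrable_stdPdf.const_mul (c * (Real.sqrt (2 * Real.pi))⁻¹))
    · exact (stdPdf_continuous.mul (continuous_const.mul
        (stdPdf_continuous.comp (by continuity)))).aestronglyMeasurable
    · refine Filter.Eventually.of_forall fun y => ?_
      rw [Real.norm_eq_abs, Real.norm_eq_abs,
        abs_of_nonneg (mul_nonneg (stdPdf_nonneg y) (mul_nonneg hc.le (stdPdf_nonneg _))),
        abs_of_nonneg (mul_nonneg (mul_nonneg hc.le (by positivity)) (stdPdf_nonneg y))]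
      have hle := stdPdf_le (c * x + b * y)
      have h0 := stdPdf_nonneg y
      nlinarith [mul_le_mul_of_nonneg_right (mul_le_mul_of_nonneg_left hle hc.le) h0]
  · have heq : (fun x => ∫ y, ‖stdPdf y * (c * stdPdf (c * x + b * y))‖) = stdPdf := by
      funext x
      have h1 : ∀ y : ℝ, ‖stdPdf y * (c * stdPdf (c * x + b * y))‖
          = stdPdf x * (c * stdPdf (c * y + b * x)) := by
        intro y
        rw [Real.norm_eq_abs,
          abs_of_nonneg (mul_nonneg (stdPdf_nonneg y) (mul_nonneg hc.le (stdPdf_nonneg _))),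
          sym hc2]
      simp_rw [h1]
      rw [integral_const_mul, sub_total hc (b * x), mul_one]
    rw [heq]
    exact integrable_stdPdf

/-- Owen's identity 10,010.1: ∫_{-∞}^Y Φ(a+bx) φ(x) dx = BN(a/√(1+b²), Y; -b/√(1+b²)). -/
theorem owen_10010_1 (a b Y : ℝ) :
    (∫ x in Set.Iic Y, stdCdf (a + b * x) * stdPdf x) =
      bvnCdf (a / Real.sqrt (1 + b ^ 2)) Y (-(b / Real.sqrt (1 + b ^ 2))) := by
  set c : ℝ := Real.sqrt (1 + b ^ 2) with hcdef
  have hc : 0 < c := Real.sqrt_pos.mpr (by positivity)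
  have hc2 : c ^ 2 = 1 + b ^ 2 := Real.sq_sqrt (by positivity)
  unfold bvnCdf
  have step1 : (∫ x in Set.Iic (a / c), ∫ y in Set.Iic Y,
      (2 * Real.pi * Real.sqrt (1 - (-(b / c)) ^ 2))⁻¹ *
        Real.exp (-(x ^ 2 - 2 * (-(b / c)) * x * y + y ^ 2) / (2 * (1 - (-(b / c)) ^ 2))))
      = ∫ x in Set.Iic (a / c), ∫ y in Set.Iic Y, stdPdf y * (c * stdPdf (c * x + b * y)) := by
    apply integral_congr_ae
    refine Filter.Eventually.of_forall fun x => ?_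
    apply integral_congr_ae
    exact Filter.Eventually.of_forall fun y => alg hc hc2 x y
  rw [step1]
  have hint : Integrable (Function.uncurry fun x y => stdPdf y * (c * stdPdf (c * x + b * y)))
      ((volume.restrict (Set.Iic (a / c))).prod (volume.restrict (Set.Iic Y))) := by
    rw [Measure.prod_restrict]
    exact (integrable_f hc hc2).restrict
  rw [integral_integral_swap hint]
  have step2 : ∀ y : ℝ, (∫ x in Set.Iic (a / c), stdPdf y * (c * stdPdf (c * x + b * y)))
      = stdCdf (a + b * y) * stdPdf y := by
    intro y
    rw [integral_const_mul, sub_Iic hc (b * y) (a / c),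
      mul_div_cancel₀ a hc.ne', mul_comm]
  exact (integral_congr_ae (Filter.Eventually.of_forall step2)).symm
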